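/- Under the assumptions on w, every element f of the weighted space H_w has a limit at infinity: lim_{t→∞} f(t) exists in U, and equals f(0) + ∫₀^∞ f'(s) ds. -/

import Mathlib

open MeasureTheory Set Filter Real

/-- every element `f` of the weighted space `H_w` (absolutely continuous with
derivative `f'` and `∫₀^∞ w ‖f'‖² < ∞`) has a limit at infinity, equal to
`f 0 + ∫₀^∞ f'(s) ds`. -/
theorem stmt_1 {U : Type*} [NormedAddCommGroup U] [InnerProductSpace ℝ U]
    [CompleteSpace U] [SecondCountableTopology U]
    (w : ℝ → ℝ) (hw_cont : Continuous w) (hw_mono : MonotoneOn w (Ici 0))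
    (hw0 : w 0 = 1)
    (hw_diff : Differentiable ℝ w)
    (hw_inv : IntegrableOn (fun x => (w x)⁻¹) (Ioi 0))
    (f f' : ℝ → U)
    (hf_loc : ∀ x ∈ Ici (0:ℝ), IntervalIntegrable f' volume 0 x)
    (hf_ac : ∀ x ∈ Ici (0:ℝ), f x = f 0 + ∫ t in (0:ℝ)..x, f' t)
    (hf_w : IntegrableOn (fun x => w x * ‖f' x‖ ^ 2) (Ioi 0)) :
    Tendsto f atTop (nhds (f 0 + ∫ s in Ioi (0:ℝ), f' s)) := by
  -- `f'` is a.e. strongly measurable on `Ioi 0`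
  have hunion : Ioi (0:ℝ) = ⋃ n : ℕ, Ioc (0:ℝ) n := by
    ext x
    simp only [mem_Ioi, mem_iUnion, mem_Ioc]
    constructor
    · intro hx
      obtain ⟨n, hn⟩ := exists_nat_ge x
      exact ⟨n, hx, hn⟩
    · rintro ⟨n, hx, -⟩; exact hx
  have hmeas : AEStronglyMeasurable f' (volume.restrict (Ioi 0)) := by
    rw [hunion, aestronglyMeasurable_iUnion_iff]
    intro n
    exact (hf_loc n (mem_Ici.mpr n.cast_nonneg)).1.aestronglyMeasurable
  -- `f'` is integrable on `Ioi 0` via AM-GM : `‖f'‖ ≤ (w ‖f'‖² + w⁻¹) / 2`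
  have hInt : IntegrableOn f' (Ioi 0) := by
    have hbound : Integrable (fun x => (w x * ‖f' x‖ ^ 2 + (w x)⁻¹) / 2)
        (volume.restrict (Ioi 0)) := (hf_w.add hw_inv).div_const 2
    refine Integrable.mono' hbound hmeas ?_
    filter_upwards [ae_restrict_mem measurableSet_Ioi] with x hx
    have hw1 : 1 ≤ w x := by
      rw [← hw0]
      exact hw_mono (le_refl (0:ℝ)) (mem_Ici.mpr (le_of_lt (mem_Ioi.mp hx))) (le_of_lt hx)
    have hwpos : 0 < w x := lt_of_lt_of_le one_pos hw1
    have hinv : w x * (w x)⁻¹ = 1 := mul_inv_cancel₀ hwpos.ne'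
    nlinarith [sq_nonneg (w x * ‖f' x‖ - 1), norm_nonneg (f' x), sq_nonneg (‖f' x‖)]
  -- the interval integrals converge to the improper integral
  have htend : Tendsto (fun x => f 0 + ∫ t in (0:ℝ)..x, f' t) atTop
      (nhds (f 0 + ∫ s in Ioi (0:ℝ), f' s)) :=
    ((intervalIntegral_tendsto_integral_Ioi 0 hInt tendsto_id).const_add (f 0))
  refine htend.congr' ?_
  filter_upwards [eventually_ge_atTop (0:ℝ)] with x hx
  exact (hf_ac x hx).symm
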